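/- Rank sub-uniformity under exchangeability: if (V₁,…,V_{n+1}) is an exchangeable vector of real random variables and R = (n+1)^{-1} Σ_{i=1}^{n+1} 1{V_i ≤ V_{n+1}}, then P{R ≤ α} ≤ α for all α ∈ [0,1]. -/
import Mathlib

open MeasureTheory Finset
open scoped ENNReal

private noncomputable def rk (n : ℕ) (j : Fin (n+1)) (V : Fin (n+1) → ℝ) : ℕ :=
  (Finset.univ.filter (fun i => V i ≤ V j)).card

-- deterministic: #{j : rk j V ≤ k} ≤ k
private lemma rk_count_le (n k : ℕ) (V : Fin (n+1) → ℝ) :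
    (Finset.univ.filter (fun j => rk n j V ≤ k)).card ≤ k := by
  set S := Finset.univ.filter (fun j => rk n j V ≤ k) with hS
  rcases S.eq_empty_or_nonempty with h | h
  · simp [h]
  · obtain ⟨j, hj, hmax⟩ := S.exists_max_image V h
    have hjk : rk n j V ≤ k := (Finset.mem_filter.mp hj).2
    refine le_trans ?_ hjk
    unfold rk
    apply Finset.card_le_card
    intro x hx
    simp only [Finset.mem_filter, Finset.mem_univ, true_and]
    exact hmax x hx

private lemma rk_meas (n : ℕ) (j : Fin (n+1)) (k : ℕ) :
    MeasurableSet {V : Fin (n+1) → ℝ | rk n j V ≤ k} := by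
  have : {V : Fin (n+1) → ℝ | rk n j V ≤ k}
      = {V | (∑ i : Fin (n+1), if V i ≤ V j then 1 else 0) ≤ k} := by
    ext V; rw [Set.mem_setOf_eq, Set.mem_setOf_eq, rk, Finset.card_filter]
  rw [this]
  have hm : Measurable (fun V : Fin (n+1) → ℝ => ∑ i : Fin (n+1), if V i ≤ V j then 1 else 0) := by
    apply Finset.measurable_sum
    intro i _
    have : Measurable fun V : Fin (n+1) → ℝ => (if V i ≤ V j then (1:ℕ) else 0) := by
      apply Measurable.ite ?_ measurable_const measurable_const
      exact measurableSet_le (measurable_pi_apply i) (measurable_pi_apply j)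
    exact this
  exact hm measurableSet_Iic

/-- Rank sub-uniformity under exchangeability: if the joint law `μ` of
`(V₁,…,V_{n+1})` is exchangeable and
`R = (n+1)⁻¹ #{i : Vᵢ ≤ V_{n+1}}`, then `P{R ≤ α} ≤ α` for all
`α ∈ [0,1]`. -/
theorem rank_subuniform_of_exchangeable
    (n : ℕ)
    (μ : Measure (Fin (n + 1) → ℝ)) [IsProbabilityMeasure μ]
    (hexch : ∀ σ : Equiv.Perm (Fin (n + 1)), μ.map (fun V => V ∘ σ) = μ) :
    ∀ α ∈ Set.Icc (0:ℝ) 1,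
      μ {V | ((n + 1 : ℝ))⁻¹ *
          ((Finset.univ.filter
            (fun i : Fin (n + 1) => V i ≤ V (Fin.last n))).card : ℝ) ≤ α}
        ≤ ENNReal.ofReal α := by
  intro α hα
  obtain ⟨hα0, hα1⟩ := hα
  set k : ℕ := ⌊α * (n+1)⌋₊ with hk
  -- step 1: for every j, μ {rk last ≤ k} = μ {rk j ≤ k}
  have key : ∀ j : Fin (n+1),
      μ {V | rk n (Fin.last n) V ≤ k} = μ {V | rk n j V ≤ k} := by
    intro j
    have hσ := hexch (Equiv.swap j (Fin.last n))
    set σ := Equiv.swap j (Fin.last n) with hσdef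
    have hmeas : Measurable (fun V : Fin (n+1) → ℝ => V ∘ σ) := by
      exact measurable_pi_lambda _ (fun i => measurable_pi_apply _)
    calc μ {V | rk n (Fin.last n) V ≤ k}
        = (μ.map (fun V => V ∘ σ)) {V | rk n (Fin.last n) V ≤ k} := by rw [hσ]
      _ = μ ((fun V => V ∘ σ) ⁻¹' {V | rk n (Fin.last n) V ≤ k}) := by
          rw [Measure.map_apply hmeas (rk_meas n (Fin.last n) k)]
      _ = μ {V | rk n j V ≤ k} := by
          congr 1
          ext V
          simp only [Set.mem_preimage, Set.mem_setOf_eq]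
          have : rk n (Fin.last n) (V ∘ σ) = rk n j V := by
            unfold rk
            have hlast : σ (Fin.last n) = j := Equiv.swap_apply_right _ _
            simp only [Function.comp_apply, hlast]
            rw [← Finset.card_map ⟨σ, σ.injective⟩]
            congr 1
            ext i
            simp only [Finset.mem_map, Finset.mem_filter, Finset.mem_univ, true_and,
              Function.Embedding.coeFn_mk]
            constructor
            · rintro ⟨a, ha, rfl⟩; exact ha
            · intro hi; exact ⟨σ.symm i, by simpa using hi, by simp⟩
          rw [this]
  -- step 2: sum bound
  have hsum : (n+1 : ℝ≥0∞) * μ {V | rk n (Fin.last n) V ≤ k} ≤ k := by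
    have : (n+1 : ℝ≥0∞) * μ {V | rk n (Fin.last n) V ≤ k}
        = ∑ j : Fin (n+1), μ {V | rk n j V ≤ k} := by
      rw [Finset.sum_congr rfl (fun j _ => (key j).symm)]
      simp [Finset.sum_const, mul_comm]
    rw [this]
    have heq : ∑ j : Fin (n+1), μ {V | rk n j V ≤ k}
        = ∫⁻ V, (∑ j : Fin (n+1), Set.indicator {V | rk n j V ≤ k} (fun _ => (1:ℝ≥0∞)) V) ∂μ := by
      rw [MeasureTheory.lintegral_finset_sum]
      · refine Finset.sum_congr rfl fun j _ => ?_
        rw [show (fun x : Fin (n+1) → ℝ => (1:ℝ≥0∞)) = (1 : (Fin (n+1) → ℝ) → ℝ≥0∞) from rfl]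
        exact (MeasureTheory.lintegral_indicator_one (rk_meas n j k)).symm
      · intro j _
        exact (measurable_const.indicator (rk_meas n j k))
    rw [heq]
    calc ∫⁻ V, (∑ j : Fin (n+1), Set.indicator {V | rk n j V ≤ k} (fun _ => (1:ℝ≥0∞)) V) ∂μ
        ≤ ∫⁻ _, (k : ℝ≥0∞) ∂μ := by
          apply MeasureTheory.lintegral_mono
          intro V
          show (∑ j : Fin (n+1), Set.indicator {V | rk n j V ≤ k} (fun _ => (1:ℝ≥0∞)) V) ≤ (k : ℝ≥0∞)
          have : (∑ j : Fin (n+1), Set.indicator {V | rk n j V ≤ k} (fun _ => (1:ℝ≥0∞)) V)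
              = ((Finset.univ.filter (fun j => rk n j V ≤ k)).card : ℝ≥0∞) := by
            rw [Finset.card_filter]
            push_cast
            refine Finset.sum_congr rfl fun j _ => ?_
            by_cases h : rk n j V ≤ k <;> simp [Set.indicator, h]
          rw [this]
          exact_mod_cast Nat.cast_le.mpr (rk_count_le n k V)
      _ = k := by simp
  -- step 3: identify the event
  have hkpos : (0:ℝ) ≤ α * (n+1) := by positivity
  have hevent : {V : Fin (n+1) → ℝ | ((n + 1 : ℝ))⁻¹ *
          ((Finset.univ.filter
            (fun i : Fin (n + 1) => V i ≤ V (Fin.last n))).card : ℝ) ≤ α}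
      = {V | rk n (Fin.last n) V ≤ k} := by
    ext V
    simp only [Set.mem_setOf_eq, rk]
    rw [hk, Nat.le_floor_iff hkpos]
    rw [inv_mul_le_iff₀ (by positivity)]
    constructor
    · intro h; linarith [h]
    · intro h; linarith [h]
  rw [hevent]
  -- step 4: conclude
  have h1 : μ {V | rk n (Fin.last n) V ≤ k} ≤ (k : ℝ≥0∞) / (n+1) := by
    rw [ENNReal.le_div_iff_mul_le (by simp) (by simp)]
    rw [mul_comm]
    exact hsum
  refine h1.trans ?_
  have : ((k : ℝ≥0∞)) / (n+1) = ENNReal.ofReal ((k:ℝ)/(n+1)) := by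
    rw [ENNReal.ofReal_div_of_pos (by positivity)]
    simp [ENNReal.ofReal_natCast]
    norm_num
    rw [ENNReal.ofReal_add] <;> norm_num
  rw [this]
  apply ENNReal.ofReal_le_ofReal
  rw [div_le_iff₀ (by positivity)]
  calc (k:ℝ) ≤ α * (n+1) := Nat.floor_le hkpos
    _ = α * (↑n + 1) := by push_cast; ring
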